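/- Let Ω ⊆ ℝ^5 be open and let u : Ω → ℝ be smooth satisfying the modified heavenly system: u_{15} − u_{13}u_{44} + u_{14}u_{34} = 0, u_{14}u_{23} − u_{13}u_{24} = 1, and u_{25} − u_{23}u_{44} + u_{24}u_{34} = 0 on Ω. For λ ∈ ℝ define the vector fields on Ω: W₁ = λ∂₁ + u_{14}∂₃ − u_{13}∂₄, W₂ = λ∂₂ + u_{24}∂₃ − u_{23}∂₄, W₃ = ∂₅ − u_{44}∂₃ + (u_{34} − λ)∂₄. Then for every λ ∈ ℝ, every x ∈ Ω and all a, b ∈ {1,2,3}, the Lie bracket [W_a, W_b](x) lies in the linear span of {W₁(x), W₂(x), W₃(x)}. -/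

import Mathlib

/-- The `i`-th standard coordinate (basis) vector of `ℝᵐ`. -/
noncomputable def e (m : ℕ) (i : Fin m) : Fin m → ℝ := Pi.single i 1

/-- Partial derivative `∂f/∂xⁱ` of a scalar function on `ℝᵐ`. -/
noncomputable def pd (m : ℕ) (f : (Fin m → ℝ) → ℝ) (i : Fin m) (x : Fin m → ℝ) : ℝ :=
  fderiv ℝ f x (e m i)

/-- Second partial derivative `∂²f/∂xⁱ∂xʲ`. -/
noncomputable def pd2 (m : ℕ) (f : (Fin m → ℝ) → ℝ) (i j : Fin m) (x : Fin m → ℝ) : ℝ :=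
  pd m (fun y => pd m f i y) j x

/-- Lie bracket of vector fields on (an open subset of) `ℝᵐ`:
`[X,Y](x) = DY(x)·X(x) − DX(x)·Y(x)`. -/
noncomputable def vbr (m : ℕ) (X Y : (Fin m → ℝ) → (Fin m → ℝ)) (x : Fin m → ℝ) :
    Fin m → ℝ :=
  fderiv ℝ Y x (X x) - fderiv ℝ X x (Y x)

/-- The Lax fields `W₁ = λ∂₁ + u₁₄∂₃ − u₁₃∂₄`, `W₂ = λ∂₂ + u₂₄∂₃ − u₂₃∂₄`,
`W₃ = ∂₅ − u₄₄∂₃ + (u₃₄ − λ)∂₄` of the modified heavenly hierarchy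
(coordinates `x¹,…,x⁵` are indexed by `0,…,4`). -/
noncomputable def Wf (u : (Fin 5 → ℝ) → ℝ) (lam : ℝ) :
    Fin 3 → (Fin 5 → ℝ) → (Fin 5 → ℝ) :=
  ![fun x => lam • e 5 0 + pd2 5 u 0 3 x • e 5 2 - pd2 5 u 0 2 x • e 5 3,
    fun x => lam • e 5 1 + pd2 5 u 1 3 x • e 5 2 - pd2 5 u 1 2 x • e 5 3,
    fun x => e 5 4 - pd2 5 u 3 3 x • e 5 2 + (pd2 5 u 2 3 x - lam) • e 5 3]

/- ### Auxiliary lemmas -/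

lemma contDiffAt_pd {f : (Fin 5 → ℝ) → ℝ} {x : Fin 5 → ℝ}
    (hf : ContDiffAt ℝ (⊤:ℕ∞) f x) (i : Fin 5) : ContDiffAt ℝ (⊤:ℕ∞) (pd 5 f i) x := by
  have h1 : ContDiffAt ℝ (⊤:ℕ∞) (fderiv ℝ f) x := hf.fderiv_right (by norm_cast)
  unfold pd
  exact h1.clm_apply contDiffAt_const

lemma fderiv_pd_apply {f : (Fin 5 → ℝ) → ℝ} {x : Fin 5 → ℝ}
    (hf : ContDiffAt ℝ (⊤:ℕ∞) f x) (i : Fin 5) (v : Fin 5 → ℝ) :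
    fderiv ℝ (pd 5 f i) x v = fderiv ℝ (fderiv ℝ f) x v (e 5 i) := by
  have h1 : ContDiffAt ℝ (⊤:ℕ∞) (fderiv ℝ f) x := hf.fderiv_right (by norm_cast)
  have hd : DifferentiableAt ℝ (fderiv ℝ f) x := h1.differentiableAt (by norm_cast)
  unfold pd
  rw [fderiv_clm_apply hd (differentiableAt_const _)]
  simp

lemma pd_swap {f : (Fin 5 → ℝ) → ℝ} {x : Fin 5 → ℝ}
    (hf : ContDiffAt ℝ (⊤:ℕ∞) f x) (i j : Fin 5) :
    pd 5 (pd 5 f i) j x = pd 5 (pd 5 f j) i x := by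
  have hsym : IsSymmSndFDerivAt ℝ f x := hf.isSymmSndFDerivAt (by rw [minSmoothness_of_isRCLikeNormedField]; exact WithTop.coe_le_coe.mpr (le_top : (2:ℕ∞) ≤ ⊤))
  show fderiv ℝ (pd 5 f i) x (e 5 j) = fderiv ℝ (pd 5 f j) x (e 5 i)
  rw [fderiv_pd_apply hf, fderiv_pd_apply hf]
  exact hsym.eq _ _

/-- On every solution of the modified heavenly system, the Lax distribution
`⟨W₁, W₂, W₃⟩` is involutive for every value of the spectral parameter. -/
theorem stmt_6 (Ω : Set (Fin 5 → ℝ)) (hΩ : IsOpen Ω)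
    (u : (Fin 5 → ℝ) → ℝ) (hu : ContDiffOn ℝ (⊤:ℕ∞) u Ω)
    (h1 : ∀ x ∈ Ω, pd2 5 u 0 4 x - pd2 5 u 0 2 x * pd2 5 u 3 3 x
        + pd2 5 u 0 3 x * pd2 5 u 2 3 x = 0)
    (h2 : ∀ x ∈ Ω, pd2 5 u 0 3 x * pd2 5 u 1 2 x - pd2 5 u 0 2 x * pd2 5 u 1 3 x = 1)
    (h3 : ∀ x ∈ Ω, pd2 5 u 1 4 x - pd2 5 u 1 2 x * pd2 5 u 3 3 x
        + pd2 5 u 1 3 x * pd2 5 u 2 3 x = 0) :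
    ∀ lam : ℝ, ∀ x ∈ Ω, ∀ a b : Fin 3,
      vbr 5 (Wf u lam a) (Wf u lam b) x ∈
        Submodule.span ℝ ({Wf u lam 0 x, Wf u lam 1 x, Wf u lam 2 x} : Set (Fin 5 → ℝ)) := by
  intro lam x hx
  have hxn : Ω ∈ nhds x := hΩ.mem_nhds hx
  have huy : ∀ y ∈ Ω, ContDiffAt ℝ (⊤:ℕ∞) u y := fun y hy => hu.contDiffAt (hΩ.mem_nhds hy)
  have hcd : ∀ (i j : Fin 5), ∀ y ∈ Ω, ContDiffAt ℝ (⊤:ℕ∞) (pd2 5 u i j) y := fun i j y hy =>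
    contDiffAt_pd (contDiffAt_pd (huy y hy) i) j
  have hdiff : ∀ i j : Fin 5, DifferentiableAt ℝ (pd2 5 u i j) x := fun i j =>
    (hcd i j x hx).differentiableAt (by norm_cast)
  -- symmetry of third partial derivatives
  have S1 : ∀ i j k : Fin 5,
      fderiv ℝ (pd2 5 u i j) x (e 5 k) = fderiv ℝ (pd2 5 u i k) x (e 5 j) :=
    fun i j k => pd_swap (contDiffAt_pd (huy x hx) i) j k
  have S2 : ∀ i j k : Fin 5,
      fderiv ℝ (pd2 5 u i j) x (e 5 k) = fderiv ℝ (pd2 5 u j i) x (e 5 k) := by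
    intro i j k
    have hev : pd2 5 u i j =ᶠ[nhds x] pd2 5 u j i := by
      filter_upwards [hxn] with y hy
      exact pd_swap (huy y hy) i j
    rw [hev.fderiv_eq]
  -- evaluation of a differential on the three Lax vectors
  have hW0x : Wf u lam 0 x = lam • e 5 0 + pd2 5 u 0 3 x • e 5 2 - pd2 5 u 0 2 x • e 5 3 := rfl
  have hW1x : Wf u lam 1 x = lam • e 5 1 + pd2 5 u 1 3 x • e 5 2 - pd2 5 u 1 2 x • e 5 3 := rfl
  have hW2x : Wf u lam 2 x = e 5 4 - pd2 5 u 3 3 x • e 5 2 + (pd2 5 u 2 3 x - lam) • e 5 3 := rfl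
  have hv0 : ∀ g : (Fin 5 → ℝ) → ℝ, fderiv ℝ g x (Wf u lam 0 x) =
      lam * fderiv ℝ g x (e 5 0) + pd2 5 u 0 3 x * fderiv ℝ g x (e 5 2)
        - pd2 5 u 0 2 x * fderiv ℝ g x (e 5 3) := by
    intro g
    rw [hW0x, map_sub, map_add, map_smul, map_smul, map_smul]
    simp [smul_eq_mul]
  have hv1 : ∀ g : (Fin 5 → ℝ) → ℝ, fderiv ℝ g x (Wf u lam 1 x) =
      lam * fderiv ℝ g x (e 5 1) + pd2 5 u 1 3 x * fderiv ℝ g x (e 5 2)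
        - pd2 5 u 1 2 x * fderiv ℝ g x (e 5 3) := by
    intro g
    rw [hW1x, map_sub, map_add, map_smul, map_smul, map_smul]
    simp [smul_eq_mul]
  have hv2 : ∀ g : (Fin 5 → ℝ) → ℝ, fderiv ℝ g x (Wf u lam 2 x) =
      fderiv ℝ g x (e 5 4) - pd2 5 u 3 3 x * fderiv ℝ g x (e 5 2)
        + (pd2 5 u 2 3 x - lam) * fderiv ℝ g x (e 5 3) := by
    intro g
    rw [hW2x, map_add, map_sub, map_smul, map_smul]
    simp [smul_eq_mul]
  -- Fréchet derivatives of the Lax fields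
  have hfd0 : fderiv ℝ (Wf u lam 0) x =
      (fderiv ℝ (pd2 5 u 0 3) x).smulRight (e 5 2)
        - (fderiv ℝ (pd2 5 u 0 2) x).smulRight (e 5 3) := by
    have h := (((hasFDerivAt_const (lam • e 5 0) x).add
        ((hdiff 0 3).hasFDerivAt.smul_const (e 5 2))).sub
        ((hdiff 0 2).hasFDerivAt.smul_const (e 5 3))).fderiv
    rw [show Wf u lam 0 = ((fun x => lam • e 5 0) + fun y => pd2 5 u 0 3 y • e 5 2)
      - fun y => pd2 5 u 0 2 y • e 5 3 from rfl]
    simpa using h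
  have hfd1 : fderiv ℝ (Wf u lam 1) x =
      (fderiv ℝ (pd2 5 u 1 3) x).smulRight (e 5 2)
        - (fderiv ℝ (pd2 5 u 1 2) x).smulRight (e 5 3) := by
    have h := (((hasFDerivAt_const (lam • e 5 1) x).add
        ((hdiff 1 3).hasFDerivAt.smul_const (e 5 2))).sub
        ((hdiff 1 2).hasFDerivAt.smul_const (e 5 3))).fderiv
    rw [show Wf u lam 1 = ((fun x => lam • e 5 1) + fun y => pd2 5 u 1 3 y • e 5 2)
      - fun y => pd2 5 u 1 2 y • e 5 3 from rfl]
    simpa using h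
  have hfd2 : fderiv ℝ (Wf u lam 2) x =
      (fderiv ℝ (pd2 5 u 2 3) x).smulRight (e 5 3)
        - (fderiv ℝ (pd2 5 u 3 3) x).smulRight (e 5 2) := by
    have h := (((hasFDerivAt_const (e 5 4) x).sub
        ((hdiff 3 3).hasFDerivAt.smul_const (e 5 2))).add
        (((hdiff 2 3).hasFDerivAt.sub_const lam).smul_const (e 5 3))).fderiv
    rw [show Wf u lam 2 = ((fun x => e 5 4) - fun y => pd2 5 u 3 3 y • e 5 2)
      + (fun y => (pd2 5 u 2 3 y - lam) • e 5 3) from rfl, h]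
    abel
  -- derivatives of the three equations of the system
  have hA : ∀ k : Fin 5,
      fderiv ℝ (pd2 5 u 0 4) x (e 5 k)
        - (pd2 5 u 0 2 x * fderiv ℝ (pd2 5 u 3 3) x (e 5 k)
            + pd2 5 u 3 3 x * fderiv ℝ (pd2 5 u 0 2) x (e 5 k))
        + (pd2 5 u 0 3 x * fderiv ℝ (pd2 5 u 2 3) x (e 5 k)
            + pd2 5 u 2 3 x * fderiv ℝ (pd2 5 u 0 3) x (e 5 k)) = 0 := by
    intro k
    have hF := (((hdiff 0 4).hasFDerivAt.sub
        ((hdiff 0 2).hasFDerivAt.mul (hdiff 3 3).hasFDerivAt)).add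
        ((hdiff 0 3).hasFDerivAt.mul (hdiff 2 3).hasFDerivAt))
    have hev : (fun y => pd2 5 u 0 4 y - pd2 5 u 0 2 y * pd2 5 u 3 3 y
        + pd2 5 u 0 3 y * pd2 5 u 2 3 y) =ᶠ[nhds x] (fun _ => (0:ℝ)) := by
      filter_upwards [hxn] with y hy using h1 y hy
    have h0 : fderiv ℝ (pd2 5 u 0 4 - pd2 5 u 0 2 * pd2 5 u 3 3 + pd2 5 u 0 3 * pd2 5 u 2 3) x
        = fderiv ℝ (fun _ => (0:ℝ)) x := hev.fderiv_eq
    rw [hF.fderiv] at h0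
    have h0k := congrArg (fun L : (Fin 5 → ℝ) →L[ℝ] ℝ => L (e 5 k)) h0
    simp only [ContinuousLinearMap.add_apply, ContinuousLinearMap.sub_apply,
      ContinuousLinearMap.smul_apply, smul_eq_mul, fderiv_fun_const,
      Pi.zero_apply, ContinuousLinearMap.zero_apply] at h0k
    linear_combination h0k
  have hB : ∀ k : Fin 5,
      fderiv ℝ (pd2 5 u 1 4) x (e 5 k)
        - (pd2 5 u 1 2 x * fderiv ℝ (pd2 5 u 3 3) x (e 5 k)
            + pd2 5 u 3 3 x * fderiv ℝ (pd2 5 u 1 2) x (e 5 k))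
        + (pd2 5 u 1 3 x * fderiv ℝ (pd2 5 u 2 3) x (e 5 k)
            + pd2 5 u 2 3 x * fderiv ℝ (pd2 5 u 1 3) x (e 5 k)) = 0 := by
    intro k
    have hF := (((hdiff 1 4).hasFDerivAt.sub
        ((hdiff 1 2).hasFDerivAt.mul (hdiff 3 3).hasFDerivAt)).add
        ((hdiff 1 3).hasFDerivAt.mul (hdiff 2 3).hasFDerivAt))
    have hev : (fun y => pd2 5 u 1 4 y - pd2 5 u 1 2 y * pd2 5 u 3 3 y
        + pd2 5 u 1 3 y * pd2 5 u 2 3 y) =ᶠ[nhds x] (fun _ => (0:ℝ)) := by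
      filter_upwards [hxn] with y hy using h3 y hy
    have h0 : fderiv ℝ (pd2 5 u 1 4 - pd2 5 u 1 2 * pd2 5 u 3 3 + pd2 5 u 1 3 * pd2 5 u 2 3) x
        = fderiv ℝ (fun _ => (0:ℝ)) x := hev.fderiv_eq
    rw [hF.fderiv] at h0
    have h0k := congrArg (fun L : (Fin 5 → ℝ) →L[ℝ] ℝ => L (e 5 k)) h0
    simp only [ContinuousLinearMap.add_apply, ContinuousLinearMap.sub_apply,
      ContinuousLinearMap.smul_apply, smul_eq_mul, fderiv_fun_const,
      Pi.zero_apply, ContinuousLinearMap.zero_apply] at h0k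
    linear_combination h0k
  have hC : ∀ k : Fin 5,
      (pd2 5 u 0 3 x * fderiv ℝ (pd2 5 u 1 2) x (e 5 k)
          + pd2 5 u 1 2 x * fderiv ℝ (pd2 5 u 0 3) x (e 5 k))
        - (pd2 5 u 0 2 x * fderiv ℝ (pd2 5 u 1 3) x (e 5 k)
            + pd2 5 u 1 3 x * fderiv ℝ (pd2 5 u 0 2) x (e 5 k)) = 0 := by
    intro k
    have hF := (((hdiff 0 3).hasFDerivAt.mul (hdiff 1 2).hasFDerivAt).sub
        ((hdiff 0 2).hasFDerivAt.mul (hdiff 1 3).hasFDerivAt))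
    have hev : (fun y => pd2 5 u 0 3 y * pd2 5 u 1 2 y - pd2 5 u 0 2 y * pd2 5 u 1 3 y)
        =ᶠ[nhds x] (fun _ => (1:ℝ)) := by
      filter_upwards [hxn] with y hy using h2 y hy
    have h0 : fderiv ℝ (pd2 5 u 0 3 * pd2 5 u 1 2 - pd2 5 u 0 2 * pd2 5 u 1 3) x
        = fderiv ℝ (fun _ => (1:ℝ)) x := hev.fderiv_eq
    rw [hF.fderiv] at h0
    have h0k := congrArg (fun L : (Fin 5 → ℝ) →L[ℝ] ℝ => L (e 5 k)) h0
    simp only [ContinuousLinearMap.add_apply, ContinuousLinearMap.sub_apply,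
      ContinuousLinearMap.smul_apply, smul_eq_mul, fderiv_fun_const,
      Pi.zero_apply, ContinuousLinearMap.zero_apply] at h0k
    linear_combination h0k
  -- the three nontrivial brackets vanish
  have z01 : vbr 5 (Wf u lam 0) (Wf u lam 1) x = 0 := by
    have hDa : fderiv ℝ (pd2 5 u 1 3) x (Wf u lam 0 x)
        = fderiv ℝ (pd2 5 u 0 3) x (Wf u lam 1 x) := by
      rw [hv0, hv1]
      linear_combination lam * ((S1 1 3 0).trans ((S2 1 0 3).trans (S1 0 1 3)))
        + pd2 5 u 0 3 x * (S1 1 3 2) - pd2 5 u 1 3 x * (S1 0 3 2) + hC 3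
    have hDb : fderiv ℝ (pd2 5 u 1 2) x (Wf u lam 0 x)
        = fderiv ℝ (pd2 5 u 0 2) x (Wf u lam 1 x) := by
      rw [hv0, hv1]
      linear_combination lam * ((S1 1 2 0).trans ((S2 1 0 2).trans (S1 0 1 2)))
        + hC 2 + pd2 5 u 0 2 x * (S1 1 3 2) - pd2 5 u 1 2 x * (S1 0 3 2)
    show fderiv ℝ (Wf u lam 1) x (Wf u lam 0 x) - fderiv ℝ (Wf u lam 0) x (Wf u lam 1 x) = 0
    rw [hfd0, hfd1]
    simp only [ContinuousLinearMap.sub_apply, ContinuousLinearMap.smulRight_apply]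
    rw [hDa, hDb]
    abel
  have z02 : vbr 5 (Wf u lam 0) (Wf u lam 2) x = 0 := by
    have hE2 : fderiv ℝ (pd2 5 u 3 3) x (Wf u lam 0 x)
        = - fderiv ℝ (pd2 5 u 0 3) x (Wf u lam 2 x) := by
      rw [hv0, hv2]
      linear_combination hA 3 + lam * ((S1 3 3 0).trans (S2 3 0 3))
        + pd2 5 u 0 3 x * ((S1 3 3 2).trans (S2 3 2 3)) + (S1 0 3 4)
        - pd2 5 u 3 3 x * (S1 0 3 2)
    have hE3 : fderiv ℝ (pd2 5 u 2 3) x (Wf u lam 0 x)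
        = - fderiv ℝ (pd2 5 u 0 2) x (Wf u lam 2 x) := by
      rw [hv0, hv2]
      linear_combination hA 2 + lam * ((S1 2 3 0).trans (S2 2 0 3)) + (S1 0 2 4)
        - pd2 5 u 2 3 x * (S1 0 3 2) + pd2 5 u 0 2 x * ((S1 3 3 2).trans (S2 3 2 3))
    show fderiv ℝ (Wf u lam 2) x (Wf u lam 0 x) - fderiv ℝ (Wf u lam 0) x (Wf u lam 2 x) = 0
    rw [hfd0, hfd2]
    simp only [ContinuousLinearMap.sub_apply, ContinuousLinearMap.smulRight_apply]
    rw [hE2, hE3]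
    simp only [neg_smul]
    abel
  have z12 : vbr 5 (Wf u lam 1) (Wf u lam 2) x = 0 := by
    have hF2 : fderiv ℝ (pd2 5 u 3 3) x (Wf u lam 1 x)
        = - fderiv ℝ (pd2 5 u 1 3) x (Wf u lam 2 x) := by
      rw [hv1, hv2]
      linear_combination hB 3 + lam * ((S1 3 3 1).trans (S2 3 1 3))
        + pd2 5 u 1 3 x * ((S1 3 3 2).trans (S2 3 2 3)) + (S1 1 3 4)
        - pd2 5 u 3 3 x * (S1 1 3 2)
    have hF3 : fderiv ℝ (pd2 5 u 2 3) x (Wf u lam 1 x)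
        = - fderiv ℝ (pd2 5 u 1 2) x (Wf u lam 2 x) := by
      rw [hv1, hv2]
      linear_combination hB 2 + lam * ((S1 2 3 1).trans (S2 2 1 3)) + (S1 1 2 4)
        - pd2 5 u 2 3 x * (S1 1 3 2) + pd2 5 u 1 2 x * ((S1 3 3 2).trans (S2 3 2 3))
    show fderiv ℝ (Wf u lam 2) x (Wf u lam 1 x) - fderiv ℝ (Wf u lam 1) x (Wf u lam 2 x) = 0
    rw [hfd1, hfd2]
    simp only [ContinuousLinearMap.sub_apply, ContinuousLinearMap.smulRight_apply]
    rw [hF2, hF3]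
    simp only [neg_smul]
    abel
  have anti : ∀ X Y : (Fin 5 → ℝ) → (Fin 5 → ℝ), vbr 5 X Y x = -vbr 5 Y X x := by
    intro X Y
    simp [vbr]
  have z10 : vbr 5 (Wf u lam 1) (Wf u lam 0) x = 0 := by rw [anti, z01, neg_zero]
  have z20 : vbr 5 (Wf u lam 2) (Wf u lam 0) x = 0 := by rw [anti, z02, neg_zero]
  have z21 : vbr 5 (Wf u lam 2) (Wf u lam 1) x = 0 := by rw [anti, z12, neg_zero]
  have z00 : vbr 5 (Wf u lam 0) (Wf u lam 0) x = 0 := sub_self _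
  have z11 : vbr 5 (Wf u lam 1) (Wf u lam 1) x = 0 := sub_self _
  have z22 : vbr 5 (Wf u lam 2) (Wf u lam 2) x = 0 := sub_self _
  have hz : ∀ a b : Fin 3, vbr 5 (Wf u lam a) (Wf u lam b) x = 0 := by
    intro a b
    fin_cases a <;> fin_cases b
    exacts [z00, z01, z02, z10, z11, z12, z20, z21, z22]
  intro a b
  rw [hz a b]
  exact Submodule.zero_mem _
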